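/- If R is a real random variable with density f_R, then the average mixing matrix M̂_R := E[M(R)] = ∫ M(t) f_R(t) dt satisfies M̂_R = Σ_r E_r ∘ E_r + 2 Σ_{s<r} (E_r ∘ E_s) · E[cos((θ_r - θ_s)R)]. -/

import Mathlib

open Matrix MeasureTheory
open scoped Matrix

attribute [local instance] Matrix.linftyOpNormedRing Matrix.linftyOpNormedAlgebra

/-- Splitting a double sum into diagonal and symmetric off-diagonal parts. -/
lemma amm_sum_split {M : Type*} [AddCommMonoid M] {d : ℕ} (F : Fin d → Fin d → M) :
    ∑ r, ∑ s, F r s =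
      (∑ r, F r r) + ∑ r, ∑ s ∈ Finset.univ.filter (· < r), (F r s + F s r) := by
  have key : ∀ r : Fin d,
      ∑ s, F r s = (∑ s ∈ Finset.univ.filter (· < r), F r s) +
        (F r r + ∑ s ∈ Finset.univ.filter (r < ·), F r s) := by
    intro r
    rw [← Finset.sum_filter_add_sum_filter_not Finset.univ (· < r) (F r)]
    congr 1
    have : Finset.univ.filter (fun s => ¬ s < r) =
        insert r (Finset.univ.filter (r < ·)) := by
      ext s
      simp only [Finset.mem_filter, Finset.mem_insert, Finset.mem_univ, true_and, not_lt]
      constructor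
      · intro h
        rcases eq_or_lt_of_le h with h | h
        · exact Or.inl h.symm
        · exact Or.inr h
      · rintro (rfl | h)
        · exact le_refl _
        · exact le_of_lt h
    rw [this, Finset.sum_insert (by simp)]
  have swap : ∑ r, ∑ s ∈ Finset.univ.filter (r < ·), F r s =
      ∑ r, ∑ s ∈ Finset.univ.filter (· < r), F s r := by
    refine Finset.sum_comm' ?_
    intro x y
    simp
  simp only [key]
  rw [Finset.sum_add_distrib, Finset.sum_add_distrib, swap]
  simp only [Finset.sum_add_distrib]
  abel

lemma amm_exp_spectral {n d : ℕ} (θ : Fin d → ℝ) (E : Fin d → Matrix (Fin n) (Fin n) ℂ)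
    (horth : ∀ r s, E r * E s = if r = s then E r else 0)
    (hsum : ∑ r, E r = 1) (c : ℂ) :
    NormedSpace.exp (c • ∑ r, ((θ r : ℂ)) • E r) =
      ∑ r, Complex.exp (c * θ r) • E r := by
  classical
  let φ : (Fin d → ℂ) →ₐ[ℂ] Matrix (Fin n) (Fin n) ℂ :=
  { toFun := fun f => ∑ r, f r • E r
    map_one' := by simp [hsum]
    map_mul' := fun f g => by
      simp only [Pi.mul_apply]
      rw [Finset.sum_mul_sum]
      simp_rw [Matrix.smul_mul, _root_.Matrix.mul_smul, horth, smul_ite, smul_zero,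
        Finset.sum_ite_eq, Finset.mem_univ, if_true, smul_smul]
    map_zero' := by simp
    map_add' := fun f g => by simp [add_smul, Finset.sum_add_distrib]
    commutes' := fun a => by
      simp only [Algebra.algebraMap_eq_smul_one]
      simp [Pi.smul_apply, smul_smul, ← Finset.smul_sum, hsum] }
  have hφc : Continuous φ := by
    have : Continuous φ.toLinearMap := φ.toLinearMap.continuous_of_finiteDimensional
    exact this
  have h1 : c • ∑ r, ((θ r : ℂ)) • E r = φ (fun r => c * θ r) := by
    simp only [φ, AlgHom.coe_mk, RingHom.coe_mk, MonoidHom.coe_mk, OneHom.coe_mk]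
    rw [Finset.smul_sum]
    simp_rw [smul_smul]
  rw [h1]
  erw [← NormedSpace.map_exp φ hφc]
  have h2 : NormedSpace.exp (fun r => c * (θ r : ℂ)) =
      fun r => Complex.exp (c * θ r) := by
    funext r
    rw [Pi.coe_exp, ← Complex.exp_eq_exp_ℂ]
  rw [h2]
  rfl

/-- if `R` is a real random variable (modelled by its distribution, a
probability measure `μ` on `ℝ`), then the average mixing matrix
`M̂_R = E[M(R)] = ∫ M(t) ∂μ` satisfies
`M̂_R = ∑ r, E r ∘ E r + 2 ∑_{s<r} (E r ∘ E s) · E[cos ((θ r - θ s) R)]`. -/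
theorem averageMixingMatrix_formula {n d : ℕ}
    (A : Matrix (Fin n) (Fin n) ℂ)
    (θ : Fin d → ℝ) (E : Fin d → Matrix (Fin n) (Fin n) ℂ)
    (hθ : Function.Injective θ)
    (hA : A = ∑ r, ((θ r : ℂ)) • E r)
    (horth : ∀ r s, E r * E s = if r = s then E r else 0)
    (hsum : ∑ r, E r = 1)
    (hreal : ∀ r, (E r).map (starRingEnd ℂ) = E r)
    (μ : Measure ℝ) [IsProbabilityMeasure μ] :
    (Matrix.of fun i j => ∫ t,
        ((NormedSpace.exp ((Complex.I * (t : ℂ)) • A)) ⊙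
          ((NormedSpace.exp ((Complex.I * (t : ℂ)) • A)).map (starRingEnd ℂ))) i j ∂μ) =
      (∑ r, E r ⊙ E r) +
        ∑ r, ∑ s ∈ Finset.univ.filter (· < r),
          (((2 * ∫ t, Real.cos ((θ r - θ s) * t) ∂μ : ℝ) : ℂ)) • (E r ⊙ E s) := by
  classical
  subst hA
  have hconj : ∀ r i j, (starRingEnd ℂ) (E r i j) = E r i j := fun r i j => by
    have h := congrFun (congrFun (hreal r) i) j
    simpa [Matrix.map_apply] using h
  have hg_int : ∀ a : ℝ,
      Integrable (fun t : ℝ => Complex.exp (↑(t * a) * Complex.I)) μ := by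
    intro a
    refine (integrable_const (1 : ℝ)).mono' ?_ ?_
    · exact (Complex.continuous_exp.comp (by continuity)).aestronglyMeasurable
    · exact ae_of_all _ fun t => by
        rw [Complex.norm_exp_ofReal_mul_I]
  ext i j
  simp only [Matrix.of_apply]
  have hM : ∀ t : ℝ,
      ((NormedSpace.exp ((Complex.I * (t : ℂ)) • ∑ r, ((θ r : ℂ)) • E r)) ⊙
        ((NormedSpace.exp ((Complex.I * (t : ℂ)) • ∑ r, ((θ r : ℂ)) • E r)).map
          (starRingEnd ℂ))) i j
      = ∑ r, ∑ s, Complex.exp (↑(t * (θ r - θ s)) * Complex.I) * (E r i j * E s i j) := by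
    intro t
    rw [amm_exp_spectral θ E horth hsum]
    simp only [Matrix.hadamard_apply, Matrix.map_apply, Matrix.sum_apply, Matrix.smul_apply,
      smul_eq_mul, map_sum, _root_.map_mul, hconj]
    rw [Finset.sum_mul_sum]
    refine Finset.sum_congr rfl fun r _ => Finset.sum_congr rfl fun s _ => ?_
    have key : Complex.exp (Complex.I * ↑t * ↑(θ r)) *
        (starRingEnd ℂ) (Complex.exp (Complex.I * ↑t * ↑(θ s))) =
        Complex.exp (↑(t * (θ r - θ s)) * Complex.I) := by
      rw [← Complex.exp_conj, ← Complex.exp_add]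
      congr 1
      simp only [_root_.map_mul, Complex.conj_I, Complex.conj_ofReal]
      push_cast
      ring
    rw [mul_mul_mul_comm, key]
  simp only [hM]
  rw [integral_finset_sum _ (fun r _ =>
    integrable_finset_sum _ (fun s _ => (hg_int _).mul_const _))]
  have step : ∀ r : Fin d,
      ∫ t, ∑ s, Complex.exp (↑(t * (θ r - θ s)) * Complex.I) * (E r i j * E s i j) ∂μ
      = ∑ s, (∫ t, Complex.exp (↑(t * (θ r - θ s)) * Complex.I) ∂μ) * (E r i j * E s i j) := by
    intro r
    rw [integral_finset_sum _ (fun s _ => (hg_int _).mul_const _)]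
    exact Finset.sum_congr rfl fun s _ => integral_mul_const _ _
  simp only [step]
  rw [amm_sum_split (fun r s =>
    (∫ t, Complex.exp (↑(t * (θ r - θ s)) * Complex.I) ∂μ) * (E r i j * E s i j))]
  have hdiag : ∀ r : Fin d,
      (∫ t, Complex.exp (↑(t * (θ r - θ r)) * Complex.I) ∂μ) * (E r i j * E r i j)
      = E r i j * E r i j := by
    intro r
    simp [integral_const, measure_univ]
  have hpair : ∀ r s : Fin d,
      (∫ t, Complex.exp (↑(t * (θ r - θ s)) * Complex.I) ∂μ) +
        (∫ t, Complex.exp (↑(t * (θ s - θ r)) * Complex.I) ∂μ)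
      = ((2 * ∫ t, Real.cos ((θ r - θ s) * t) ∂μ : ℝ) : ℂ) := by
    intro r s
    rw [← integral_add (hg_int _) (hg_int _)]
    have hpt : ∀ t : ℝ, Complex.exp (↑(t * (θ r - θ s)) * Complex.I) +
        Complex.exp (↑(t * (θ s - θ r)) * Complex.I)
        = ((2 * Real.cos ((θ r - θ s) * t) : ℝ) : ℂ) := by
      intro t
      have h1 : ((t * (θ s - θ r) : ℝ) : ℂ) = -((t * (θ r - θ s) : ℝ) : ℂ) := by
        push_cast; ring
      rw [h1, ← Complex.two_cos]
      push_cast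
      ring_nf
    simp only [hpt]
    have h2 : ∫ t, ((2 * Real.cos ((θ r - θ s) * t) : ℝ) : ℂ) ∂μ
        = ((∫ t, 2 * Real.cos ((θ r - θ s) * t) ∂μ : ℝ) : ℂ) := integral_ofReal
    rw [h2]
    norm_cast
    exact integral_const_mul 2 _
  simp only [Matrix.add_apply, Matrix.sum_apply, Matrix.hadamard_apply, Matrix.smul_apply,
    smul_eq_mul]
  congr 1
  · exact Finset.sum_congr rfl fun r _ => hdiag r
  · refine Finset.sum_congr rfl fun r _ => Finset.sum_congr rfl fun s hs => ?_
    rw [← hpair r s]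
    ring
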